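/- If β' ≥ β with β, β' ∈ (0,1], then ψ_{β'}(x) ≤ ψ_β(x) for all x ≥ 0; i.e., ψ_β(x) is non-increasing in β. -/

import Mathlib

open Topology Filter


noncomputable def phi (β x : ℝ) : ℝ := ((1 + x) / (1 + (1 + β) * x)) ^ (1 / x - 1)

noncomputable def psi (β x : ℝ) : ℝ := (phi β x - x) / ((1 - x) * phi β x)

lemma phi_pos {β x : ℝ} (hβ : 0 < β) (hx : 0 < x) : 0 < phi β x := by
  apply Real.rpow_pos_of_pos
  apply div_pos <;> nlinarith

lemma psi_eq {β x : ℝ} (hβ : 0 < β) (hx : 0 < x) :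
    psi β x = (1 - x / phi β x) / (1 - x) := by
  have h := (phi_pos hβ hx).ne'
  unfold psi
  field_simp

lemma key {β β' x : ℝ} (hβ : 0 < β) (hle : β ≤ β') (hx : 0 < x) (hx1 : x ≠ 1) :
    psi β' x ≤ psi β x := by
  have hβ' : 0 < β' := lt_of_lt_of_le hβ hle
  set b : ℝ := (1 + x) / (1 + (1 + β) * x) with hb
  set b' : ℝ := (1 + x) / (1 + (1 + β') * x) with hb'
  have hbpos : 0 < b := div_pos (by linarith) (by nlinarith)
  have hb'pos : 0 < b' := div_pos (by linarith) (by nlinarith)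
  have hble : b' ≤ b := by
    apply div_le_div_of_nonneg_left (by linarith) (by nlinarith) (by nlinarith)
  have hφ : 0 < phi β x := phi_pos hβ hx
  have hφ' : 0 < phi β' x := phi_pos hβ' hx
  rw [psi_eq hβ hx, psi_eq hβ' hx]
  rcases lt_or_gt_of_ne hx1 with h1 | h1
  · -- x < 1, exponent nonneg
    have he : (0:ℝ) ≤ 1 / x - 1 := by
      rw [sub_nonneg, le_div_iff₀ hx]; linarith
    have hφle : phi β' x ≤ phi β x :=
      Real.rpow_le_rpow hb'pos.le hble he
    have hd : x / phi β x ≤ x / phi β' x :=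
      div_le_div_of_nonneg_left hx.le hφ' hφle
    apply div_le_div_of_nonneg_right (by linarith) (by linarith)
  · -- x > 1, exponent nonpos
    have he : (1:ℝ) / x - 1 ≤ 0 := by
      rw [sub_nonpos, div_le_iff₀ hx]; linarith
    have hφle : phi β x ≤ phi β' x :=
      Real.rpow_le_rpow_of_nonpos hb'pos hble he
    have hd : x / phi β' x ≤ x / phi β x :=
      div_le_div_of_nonneg_left hx.le hφ hφle
    rw [div_le_div_right_of_neg (by linarith)]
    linarith

theorem psi_antitone_in_beta (β β' : ℝ) (hβ : β ∈ Set.Ioc (0 : ℝ) 1)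
    (hβ' : β' ∈ Set.Ioc (0 : ℝ) 1) (hle : β ≤ β') (gβ gβ' : ℝ → ℝ)
    (hgβ_cont : ContinuousOn gβ (Set.Ici (0 : ℝ)))
    (hgβ_eq : ∀ x : ℝ, 0 < x → x ≠ 1 → gβ x = psi β x)
    (hgβ'_cont : ContinuousOn gβ' (Set.Ici (0 : ℝ)))
    (hgβ'_eq : ∀ x : ℝ, 0 < x → x ≠ 1 → gβ' x = psi β' x) :
    ∀ x : ℝ, 0 ≤ x → gβ' x ≤ gβ x := by
  obtain ⟨hβ0, _⟩ := hβ
  have main : ∀ y : ℝ, 0 < y → y ≠ 1 → gβ' y ≤ gβ y := by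
    intro y hy hy1
    rw [hgβ_eq y hy hy1, hgβ'_eq y hy hy1]
    exact key hβ0 hle hy hy1
  intro x hx
  by_cases h0 : x = 0
  · subst h0
    have hsub : Set.Ioi (0:ℝ) ⊆ Set.Ici 0 := Set.Ioi_subset_Ici_self
    have hmono : 𝓝[>] (0:ℝ) ≤ 𝓝[Set.Ici (0:ℝ)] 0 := nhdsWithin_mono _ hsub
    have t1 : Filter.Tendsto gβ' (𝓝[>] (0:ℝ)) (𝓝 (gβ' 0)) :=
      (hgβ'_cont 0 (by simp)).mono_left hmono
    have t2 : Filter.Tendsto gβ (𝓝[>] (0:ℝ)) (𝓝 (gβ 0)) :=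
      (hgβ_cont 0 (by simp)).mono_left hmono
    refine le_of_tendsto_of_tendsto t1 t2 ?_
    have hlt : ∀ᶠ y in 𝓝[>] (0:ℝ), y < 1 :=
      eventually_nhdsWithin_of_eventually_nhds (Filter.Tendsto.eventually_lt_const
        (by norm_num) Filter.tendsto_id)
    filter_upwards [self_mem_nhdsWithin, hlt] with y hy hy1
    exact main y hy (ne_of_lt hy1)
  · by_cases h1 : x = 1
    · subst h1
      have hsub : Set.Ioi (1:ℝ) ⊆ Set.Ici 0 := fun y hy => le_of_lt (show (0:ℝ) < y by
        have : (1:ℝ) < y := hy; linarith)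
      have hmono : 𝓝[>] (1:ℝ) ≤ 𝓝[Set.Ici (0:ℝ)] 1 := nhdsWithin_mono _ hsub
      have t1 : Filter.Tendsto gβ' (𝓝[>] (1:ℝ)) (𝓝 (gβ' 1)) :=
        (hgβ'_cont 1 (by norm_num)).mono_left hmono
      have t2 : Filter.Tendsto gβ (𝓝[>] (1:ℝ)) (𝓝 (gβ 1)) :=
        (hgβ_cont 1 (by norm_num)).mono_left hmono
      refine le_of_tendsto_of_tendsto t1 t2 ?_
      filter_upwards [self_mem_nhdsWithin] with y hy
      have hy1 : (1:ℝ) < y := hy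
      exact main y (by linarith) (ne_of_gt hy1)
    · exact main x (lt_of_le_of_ne hx (Ne.symm h0)) h1
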